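/- arXiv:2506.03815 — 4 statements merged into one kernel-verified Lean document; each statement's English description precedes it below -/
import Mathlib

section
/- Let p ≥ 1 and l ≥ 1 be integers, set m = 2^l, and let f ∈ Ω be monotone. Then the number of points of the refined inner grid lying in the uncertain region determined by the coarse inner grid satisfies card( {i/(2m) : i = 1, …, 2m−1}^p ∩ U( {i/m : i = 1, …, m−1}^p , f) ) = (2m − 1)^p − (2m − 2)^p. -/
open MeasureTheory Set

/-- The uncertain region `U(D, f)` on the cube `[0,1]^p`. -/
def uncertainRegion (p : ℕ) (D : Set (Fin p → ℝ)) (f : (Fin p → ℝ) → ℝ) :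
    Set (Fin p → ℝ) :=
  Icc 0 1 \ ((⋃ x ∈ {y ∈ D | f y = -1}, Icc (0 : Fin p → ℝ) x) ∪
             (⋃ x ∈ {y ∈ D | f y = 1}, Icc x (1 : Fin p → ℝ)))

/-- `Ω`: monotone `{-1,1}`-valued functions on the cube `[0,1]^p`. -/
def OmegaSet (p : ℕ) : Set ((Fin p → ℝ) → ℝ) :=
  {f | MonotoneOn f (Icc 0 1) ∧ ∀ x ∈ Icc (0 : Fin p → ℝ) 1, f x = -1 ∨ f x = 1}

/-- The inner grid `{i/m : i = 1, …, m-1}^p`. -/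
def innerDyGrid (p m : ℕ) : Set (Fin p → ℝ) :=
  {x | ∀ k, ∃ i : ℕ, 1 ≤ i ∧ i < m ∧ x k = (i : ℝ) / (m : ℝ)}

namespace RefineAux

/-- The grid point with coordinates `a k / m`. -/
noncomputable def cPt (p m : ℕ) (a : Fin p → ℕ) : Fin p → ℝ := fun k => (a k : ℝ) / (m : ℝ)

lemma div_le_div_nat {m n : ℕ} (hm : 0 < m) (hn : 0 < n) (a b : ℕ) :
    (a : ℝ) / m ≤ (b : ℝ) / n ↔ a * n ≤ b * m := by
  rw [div_le_div_iff₀ (by exact_mod_cast hm) (by exact_mod_cast hn)]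
  exact_mod_cast Iff.rfl

lemma cPt_le_cPt {p : ℕ} {m n : ℕ} (hm : 0 < m) (hn : 0 < n) {a b : Fin p → ℕ}
    (h : ∀ k, a k * n ≤ b k * m) : cPt p m a ≤ cPt p n b :=
  Pi.le_def.mpr fun k => (div_le_div_nat hm hn _ _).2 (h k)

lemma cPt_mem_Icc {p m : ℕ} (hm : 0 < m) {a : Fin p → ℕ} (ha : ∀ k, a k ≤ m) :
    cPt p m a ∈ Icc (0 : Fin p → ℝ) 1 := by
  have hm' : (0 : ℝ) < (m : ℝ) := by exact_mod_cast hm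
  refine ⟨Pi.le_def.mpr fun k => ?_, Pi.le_def.mpr fun k => ?_⟩
  · show (0:ℝ) ≤ (a k : ℝ) / m
    positivity
  show (a k : ℝ) / m ≤ 1
  rw [div_le_one hm']
  exact_mod_cast ha k

lemma cPt_mem_grid {p m : ℕ} {a : Fin p → ℕ} (ha : ∀ k, 1 ≤ a k ∧ a k < m) :
    cPt p m a ∈ innerDyGrid p m :=
  fun k => ⟨a k, (ha k).1, (ha k).2, rfl⟩

/-- Certainty from below (covered by some `Icc x 1` with `f x = 1`). -/
def C1 (p m : ℕ) (f : (Fin p → ℝ) → ℝ) (j : Fin p → ℕ) : Prop :=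
  (∀ k, 2 ≤ j k) ∧ f (cPt p m fun k => j k / 2) = 1

/-- Certainty from above (covered by some `Icc 0 x` with `f x = -1`). -/
def C2 (p m : ℕ) (f : (Fin p → ℝ) → ℝ) (j : Fin p → ℕ) : Prop :=
  (∀ k, j k ≤ 2 * m - 2) ∧ f (cPt p m fun k => (j k + 1) / 2) = -1

lemma up_iff {p m : ℕ} (hm : 2 ≤ m) {f : (Fin p → ℝ) → ℝ} (hf : f ∈ OmegaSet p)
    {j : Fin p → ℕ} (hj1 : ∀ k, 1 ≤ j k) (hj2 : ∀ k, j k ≤ 2 * m - 1) :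
    cPt p (2 * m) j ∈ (⋃ x ∈ {y ∈ innerDyGrid p m | f y = 1}, Icc x (1 : Fin p → ℝ))
      ↔ C1 p m f j := by
  have hm0 : 0 < m := by omega
  have h2m0 : 0 < 2 * m := by omega
  simp only [mem_iUnion, exists_prop, mem_sep_iff, mem_Icc]
  constructor
  · rintro ⟨x, ⟨hxD, hfx⟩, hxy, -⟩
    choose i hi1 him hxi using hxD
    have hxeq : x = cPt p m i := funext hxi
    have key : ∀ k, 2 * i k ≤ j k := by
      intro k
      have h1 : x k ≤ cPt p (2 * m) j k := hxy k
      rw [hxi k] at h1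
      have h2 : i k * (2 * m) ≤ j k * m := (div_le_div_nat hm0 h2m0 _ _).1 h1
      have h3 : (2 * i k) * m ≤ j k * m := by
        calc (2 * i k) * m = i k * (2 * m) := by ring
        _ ≤ j k * m := h2
      exact Nat.le_of_mul_le_mul_right h3 hm0
    have h2j : ∀ k, 2 ≤ j k := fun k => by have := hi1 k; have := key k; omega
    have hle : x ≤ cPt p m (fun k => j k / 2) := by
      rw [hxeq]
      refine cPt_le_cPt hm0 hm0 fun k => Nat.mul_le_mul_right m ?_
      have := key k; omega
    have hxmem : x ∈ Icc (0 : Fin p → ℝ) 1 := by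
      rw [hxeq]; exact cPt_mem_Icc hm0 fun k => by have := him k; omega
    have hamem : cPt p m (fun k => j k / 2) ∈ Icc (0 : Fin p → ℝ) 1 :=
      cPt_mem_Icc hm0 fun k => by have := hj2 k; omega
    have hmono := hf.1 hxmem hamem hle
    rw [hfx] at hmono
    rcases hf.2 _ hamem with h | h
    · rw [h] at hmono; linarith
    · exact ⟨h2j, h⟩
  · rintro ⟨h2, hfa⟩
    refine ⟨cPt p m (fun k => j k / 2), ⟨cPt_mem_grid fun k => ?_, hfa⟩, ?_, ?_⟩
    · have := h2 k; have := hj2 k; omega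
    · refine cPt_le_cPt hm0 h2m0 fun k => ?_
      have h3 : j k / 2 * 2 ≤ j k := Nat.div_mul_le_self _ _
      calc j k / 2 * (2 * m) = (j k / 2 * 2) * m := by ring
      _ ≤ j k * m := Nat.mul_le_mul_right m h3
    · exact (cPt_mem_Icc h2m0 fun k => by have := hj2 k; omega).2

lemma down_iff {p m : ℕ} (hm : 2 ≤ m) {f : (Fin p → ℝ) → ℝ} (hf : f ∈ OmegaSet p)
    {j : Fin p → ℕ} (hj1 : ∀ k, 1 ≤ j k) (hj2 : ∀ k, j k ≤ 2 * m - 1) :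
    cPt p (2 * m) j ∈ (⋃ x ∈ {y ∈ innerDyGrid p m | f y = -1}, Icc (0 : Fin p → ℝ) x)
      ↔ C2 p m f j := by
  have hm0 : 0 < m := by omega
  have h2m0 : 0 < 2 * m := by omega
  simp only [mem_iUnion, exists_prop, mem_sep_iff, mem_Icc]
  constructor
  · rintro ⟨x, ⟨hxD, hfx⟩, -, hyx⟩
    choose i hi1 him hxi using hxD
    have hxeq : x = cPt p m i := funext hxi
    have key : ∀ k, j k ≤ 2 * i k := by
      intro k
      have h1 : cPt p (2 * m) j k ≤ x k := hyx k
      rw [hxi k] at h1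
      have h2 : j k * m ≤ i k * (2 * m) := (div_le_div_nat h2m0 hm0 _ _).1 h1
      have h3 : j k * m ≤ (2 * i k) * m := by
        calc j k * m ≤ i k * (2 * m) := h2
        _ = (2 * i k) * m := by ring
      exact Nat.le_of_mul_le_mul_right h3 hm0
    have h2j : ∀ k, j k ≤ 2 * m - 2 := fun k => by have := him k; have := key k; omega
    have hle : cPt p m (fun k => (j k + 1) / 2) ≤ x := by
      rw [hxeq]
      refine cPt_le_cPt hm0 hm0 fun k => Nat.mul_le_mul_right m ?_
      have := key k; omega
    have hxmem : x ∈ Icc (0 : Fin p → ℝ) 1 := by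
      rw [hxeq]; exact cPt_mem_Icc hm0 fun k => by have := him k; omega
    have hbmem : cPt p m (fun k => (j k + 1) / 2) ∈ Icc (0 : Fin p → ℝ) 1 :=
      cPt_mem_Icc hm0 fun k => by have := hj2 k; omega
    have hmono := hf.1 hbmem hxmem hle
    rw [hfx] at hmono
    rcases hf.2 _ hbmem with h | h
    · exact ⟨h2j, h⟩
    · rw [h] at hmono; linarith
  · rintro ⟨h2, hfb⟩
    refine ⟨cPt p m (fun k => (j k + 1) / 2), ⟨cPt_mem_grid fun k => ?_, hfb⟩, ?_, ?_⟩
    · have := h2 k; have := hj1 k; omega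
    · exact (cPt_mem_Icc h2m0 fun k => by have := hj2 k; omega).1
    · refine cPt_le_cPt h2m0 hm0 fun k => ?_
      have h3 : j k + 1 ≤ (j k + 1) / 2 * 2 + 1 := by omega
      have h4 : j k ≤ (j k + 1) / 2 * 2 := by omega
      calc j k * m ≤ ((j k + 1) / 2 * 2) * m := Nat.mul_le_mul_right m h4
      _ = (j k + 1) / 2 * (2 * m) := by ring

lemma mem_unc_iff {p m : ℕ} (hm : 2 ≤ m) {f : (Fin p → ℝ) → ℝ} (hf : f ∈ OmegaSet p)
    {j : Fin p → ℕ} (hj1 : ∀ k, 1 ≤ j k) (hj2 : ∀ k, j k ≤ 2 * m - 1) :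
    cPt p (2 * m) j ∈ uncertainRegion p (innerDyGrid p m) f
      ↔ ¬(C1 p m f j ∨ C2 p m f j) := by
  have hy : cPt p (2 * m) j ∈ Icc (0 : Fin p → ℝ) 1 :=
    cPt_mem_Icc (by omega) fun k => by have := hj2 k; omega
  unfold uncertainRegion
  rw [mem_diff, mem_union, down_iff hm hf hj1 hj2, up_iff hm hf hj1 hj2]
  constructor
  · rintro ⟨-, h⟩; tauto
  · intro h; exact ⟨hy, by tauto⟩

lemma count_cert (p m : ℕ) (hm : 2 ≤ m) (f : (Fin p → ℝ) → ℝ) (hf : f ∈ OmegaSet p)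
    [DecidablePred fun j : Fin p → ℕ => C1 p m f j ∨ C2 p m f j] :
    ((Fintype.piFinset fun _ : Fin p => Finset.Icc 1 (2 * m - 1)).filter
      (fun j => C1 p m f j ∨ C2 p m f j)).card = (2 * m - 2) ^ p := by
  classical
  have hm0 : 0 < m := by omega
  -- facts about the "ceil" point of b ∈ {1,…,2m-2}^p
  have hceil_mem : ∀ b : Fin p → ℕ, (∀ k, b k ≤ 2 * m - 2) →
      cPt p m (fun k => (b k + 1) / 2) ∈ Icc (0 : Fin p → ℝ) 1 := fun b hb =>
    cPt_mem_Icc hm0 fun k => by have := hb k; omega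
  have key : ((Fintype.piFinset fun _ : Fin p => Finset.Icc 1 (2 * m - 1)).filter
      (fun j => C1 p m f j ∨ C2 p m f j)).card =
      (Fintype.piFinset fun _ : Fin p => Finset.Icc 1 (2 * m - 2)).card := by
    refine Finset.card_bij'
      (fun j _ => if C1 p m f j then (fun k => j k - 1) else j)
      (fun b _ => if f (cPt p m fun k => (b k + 1) / 2) = 1 then (fun k => b k + 1) else b)
      ?_ ?_ ?_ ?_
    · -- maps into target
      intro j hj
      simp only [Finset.mem_filter, Fintype.mem_piFinset, Finset.mem_Icc] at hj
      obtain ⟨hjJ, hcert⟩ := hj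
      by_cases hC1 : C1 p m f j
      · rw [if_pos hC1]
        simp only [Fintype.mem_piFinset, Finset.mem_Icc]
        intro k
        have := hC1.1 k; have := (hjJ k).2; omega
      · rw [if_neg hC1]
        have hC2 : C2 p m f j := by tauto
        simp only [Fintype.mem_piFinset, Finset.mem_Icc]
        intro k
        have := hC2.1 k; have := (hjJ k).1; omega
    · -- inverse maps into source
      intro b hb
      simp only [Fintype.mem_piFinset, Finset.mem_Icc] at hb
      have hb2 : ∀ k, b k ≤ 2 * m - 2 := fun k => (hb k).2
      by_cases hfb : f (cPt p m fun k => (b k + 1) / 2) = 1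
      · rw [if_pos hfb]
        simp only [Finset.mem_filter, Fintype.mem_piFinset, Finset.mem_Icc]
        constructor
        · intro k; have := (hb k).1; have := (hb k).2; omega
        · left
          exact ⟨fun k => by have := (hb k).1; show 2 ≤ b k + 1; omega, hfb⟩
      · rw [if_neg hfb]
        have hfb' : f (cPt p m fun k => (b k + 1) / 2) = -1 := by
          rcases hf.2 _ (hceil_mem b hb2) with h | h
          · exact h
          · exact absurd h hfb
        simp only [Finset.mem_filter, Fintype.mem_piFinset, Finset.mem_Icc]
        constructor
        · intro k; have := (hb k).1; have := (hb k).2; omega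
        · right; exact ⟨hb2, hfb'⟩
    · -- left inverse
      intro j hj
      simp only [Finset.mem_filter, Fintype.mem_piFinset, Finset.mem_Icc] at hj
      obtain ⟨hjJ, hcert⟩ := hj
      by_cases hC1 : C1 p m f j
      · rw [if_pos hC1]
        have heq : (fun k => (j k - 1 + 1) / 2) = (fun k => j k / 2) := by
          funext k; have := hC1.1 k; omega
        have hcond : f (cPt p m fun k => ((fun k => j k - 1) k + 1) / 2) = 1 := by
          show f (cPt p m fun k => (j k - 1 + 1) / 2) = 1
          rw [heq]; exact hC1.2
        rw [if_pos hcond]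
        funext k
        show j k - 1 + 1 = j k
        have := hC1.1 k; omega
      · rw [if_neg hC1]
        have hC2 : C2 p m f j := by tauto
        have hcond : ¬ f (cPt p m fun k => (j k + 1) / 2) = 1 := by
          rw [hC2.2]; norm_num
        rw [if_neg hcond]
    · -- right inverse
      intro b hb
      simp only [Fintype.mem_piFinset, Finset.mem_Icc] at hb
      have hb2 : ∀ k, b k ≤ 2 * m - 2 := fun k => (hb k).2
      by_cases hfb : f (cPt p m fun k => (b k + 1) / 2) = 1
      · rw [if_pos hfb]
        have hC1 : C1 p m f (fun k => b k + 1) := by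
          refine ⟨fun k => by have := (hb k).1; show 2 ≤ b k + 1; omega, ?_⟩
          show f (cPt p m fun k => (b k + 1) / 2) = 1
          exact hfb
        rw [if_pos hC1]
        funext k; simp
      · rw [if_neg hfb]
        have hfb' : f (cPt p m fun k => (b k + 1) / 2) = -1 := by
          rcases hf.2 _ (hceil_mem b hb2) with h | h
          · exact h
          · exact absurd h hfb
        have hC1 : ¬ C1 p m f b := by
          rintro ⟨-, hval⟩
          have hle : cPt p m (fun k => b k / 2) ≤ cPt p m (fun k => (b k + 1) / 2) :=
            cPt_le_cPt hm0 hm0 fun k => Nat.mul_le_mul_right m (by omega)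
          have hmem1 : cPt p m (fun k => b k / 2) ∈ Icc (0 : Fin p → ℝ) 1 :=
            cPt_mem_Icc hm0 fun k => by have := hb2 k; omega
          have hmono := hf.1 hmem1 (hceil_mem b hb2) hle
          rw [hval, hfb'] at hmono
          linarith
        rw [if_neg hC1]
  rw [key, Fintype.card_piFinset]
  have hcard : (Finset.Icc 1 (2 * m - 2)).card = 2 * m - 2 := by
    rw [Nat.card_Icc]; omega
  simp [hcard]

end RefineAux

open RefineAux

/-- Single refinement step for inner grids: with `m = 2^l`, `l ≥ 1`, the number of
points of the refined inner grid `{i/(2m) : i = 1,…,2m-1}^p` lying in the uncertain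
region of the coarse inner grid `{i/m : i = 1,…,m-1}^p` equals
`(2m - 1)^p - (2m - 2)^p`. -/
theorem refined_inner_grid_uncertain_card (p l : ℕ) (hp : 1 ≤ p) (hl : 1 ≤ l)
    (f : (Fin p → ℝ) → ℝ) (hf : f ∈ OmegaSet p) :
    (innerDyGrid p (2 * 2 ^ l) ∩ uncertainRegion p (innerDyGrid p (2 ^ l)) f).ncard
      = (2 * 2 ^ l - 1) ^ p - (2 * 2 ^ l - 2) ^ p := by
  classical
  set m := 2 ^ l with hm_def
  have hm : 2 ≤ m := by
    calc 2 = 2 ^ 1 := by norm_num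
    _ ≤ 2 ^ l := Nat.pow_le_pow_right (by norm_num) hl
  have hm0 : 0 < m := by omega
  set J := Fintype.piFinset fun _ : Fin p => Finset.Icc 1 (2 * m - 1) with hJ
  -- injectivity of the embedding
  have hinj : Function.Injective (cPt p (2 * m)) := by
    intro a b hab
    funext k
    have h1 := congrFun hab k
    have h2m : ((2 * m : ℕ) : ℝ) ≠ 0 := by positivity
    simp only [cPt] at h1
    have : ((a k : ℕ) : ℝ) = ((b k : ℕ) : ℝ) := by
      field_simp at h1; exact_mod_cast h1
    exact_mod_cast this
  -- the set as an image of a finset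
  have hset : innerDyGrid p (2 * m) ∩ uncertainRegion p (innerDyGrid p m) f
      = cPt p (2 * m) '' ((J.filter fun j => ¬(C1 p m f j ∨ C2 p m f j)) : Finset (Fin p → ℕ)) := by
    ext y
    constructor
    · rintro ⟨hyG, hyU⟩
      choose j hj1 hj2 hyj using hyG
      have hyeq : y = cPt p (2 * m) j := funext hyj
      refine ⟨j, ?_, hyeq.symm⟩
      rw [Finset.mem_coe, Finset.mem_filter]
      constructor
      · rw [hJ, Fintype.mem_piFinset]
        intro k
        rw [Finset.mem_Icc]
        have := hj1 k; have := hj2 k; omega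
      · rw [hyeq] at hyU
        exact (mem_unc_iff hm hf (fun k => hj1 k) (fun k => by have := hj2 k; omega)).1 hyU
    · rintro ⟨j, hjmem, rfl⟩
      rw [Finset.mem_coe, Finset.mem_filter] at hjmem
      obtain ⟨hjJ, hnot⟩ := hjmem
      rw [hJ, Fintype.mem_piFinset] at hjJ
      simp only [Finset.mem_Icc] at hjJ
      refine ⟨cPt_mem_grid fun k => ⟨(hjJ k).1, by have := (hjJ k).2; omega⟩, ?_⟩
      exact (mem_unc_iff hm hf (fun k => (hjJ k).1) (fun k => (hjJ k).2)).2 hnot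
  rw [hset, Set.ncard_image_of_injective _ hinj, Set.ncard_coe_finset]
  have h1 : (J.filter fun j => C1 p m f j ∨ C2 p m f j).card = (2 * m - 2) ^ p :=
    count_cert p m hm f hf
  have h2 : (J.filter fun j => C1 p m f j ∨ C2 p m f j).card
      + (J.filter fun j => ¬(C1 p m f j ∨ C2 p m f j)).card = J.card :=
    Finset.card_filter_add_card_filter_not _
  have hJcard : J.card = (2 * m - 1) ^ p := by
    rw [hJ, Fintype.card_piFinset]
    have hcard : (Finset.Icc 1 (2 * m - 1)).card = 2 * m - 1 := by
      rw [Nat.card_Icc]; omega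
    simp [hcard]
  have hle : (2 * m - 2) ^ p ≤ (2 * m - 1) ^ p := Nat.pow_le_pow_left (by omega) p
  omega
end

section
/- Let p ≥ 2 be an integer, let D ⊆ [0,1]^p be a finite design, and let v > 0 satisfy sup_{f ∈ Ω} V(U(D, f)) ≤ v. Let d be a real number with (p−1)!·v ≤ d and d + (p−1)!·v ≤ 1 (so in particular 0 < d < 1 − (p−1)!·v). Then card{ x ∈ D : d − (p−1)!·v < Σ_{k=1}^p x_k < d + (p−1)!·v } ≥ ( (d + (p−1)!·v)^p − (d − (p−1)!·v)^p − v·p! ) / ( (p−1)!·v )^p. -/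
open MeasureTheory Set

set_option maxHeartbeats 1000000

def simplexSet (n : ℕ) (t : ℝ) : Set (Fin n → ℝ) :=
  {x | (∀ i, 0 ≤ x i) ∧ ∑ i, x i ≤ t}

lemma measurableSet_simplexSet (n : ℕ) (t : ℝ) : MeasurableSet (simplexSet n t) := by
  have h1 : MeasurableSet {x : Fin n → ℝ | ∀ i, 0 ≤ x i} := by
    have : {x : Fin n → ℝ | ∀ i, 0 ≤ x i} = ⋂ i, {x | 0 ≤ x i} := by ext x; simp
    rw [this]
    exact MeasurableSet.iInter fun i => measurableSet_le measurable_const (measurable_pi_apply i)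
  have h2 : MeasurableSet {x : Fin n → ℝ | ∑ i, x i ≤ t} :=
    measurableSet_le (Finset.measurable_sum Finset.univ fun i _ => measurable_pi_apply i)
      measurable_const
  exact h1.inter h2

lemma simplexSet_empty {n : ℕ} {t : ℝ} (ht : t < 0) : simplexSet n t = ∅ := by
  ext x
  simp only [simplexSet, mem_setOf_eq, mem_empty_iff_false, iff_false, not_and]
  intro h hle
  have : (0:ℝ) ≤ ∑ i, x i := Finset.sum_nonneg fun i _ => h i
  linarith

lemma volume_simplexSet : ∀ (n : ℕ) (t : ℝ), 0 ≤ t →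
    volume (simplexSet n t) = ENNReal.ofReal (t ^ n / n.factorial) := by
  intro n
  induction n with
  | zero =>
    intro t ht
    have : simplexSet 0 t = univ := by
      ext x; simp [simplexSet, ht]
    rw [this]
    simp [volume_pi, Measure.pi_empty_univ]
  | succ n ih =>
    intro t ht
    set e := MeasurableEquiv.piFinSuccAbove (fun _ : Fin (n+1) => ℝ) 0 with he
    have hmp : MeasurePreserving e volume volume :=
      volume_preserving_piFinSuccAbove (fun _ : Fin (n+1) => ℝ) 0
    set T : Set (ℝ × (Fin n → ℝ)) :=
      {q | 0 ≤ q.1 ∧ (∀ i, 0 ≤ q.2 i) ∧ q.1 + ∑ i, q.2 i ≤ t} with hT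
    have hTmeas : MeasurableSet T := by
      have h1 : MeasurableSet {q : ℝ × (Fin n → ℝ) | 0 ≤ q.1} :=
        measurableSet_le measurable_const measurable_fst
      have h2 : MeasurableSet {q : ℝ × (Fin n → ℝ) | ∀ i, 0 ≤ q.2 i} := by
        have : {q : ℝ × (Fin n → ℝ) | ∀ i, 0 ≤ q.2 i} = ⋂ i, {q | 0 ≤ q.2 i} := by ext q; simp
        rw [this]
        exact MeasurableSet.iInter fun i => measurableSet_le measurable_const
          (show Measurable fun q : ℝ × (Fin n → ℝ) => q.2 i from
            (measurable_pi_apply i).comp measurable_snd)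
      have h3 : MeasurableSet {q : ℝ × (Fin n → ℝ) | q.1 + ∑ i, q.2 i ≤ t} :=
        measurableSet_le (measurable_fst.add
          (Finset.measurable_sum Finset.univ fun i _ =>
            (measurable_pi_apply i).comp measurable_snd)) measurable_const
      exact h1.inter (h2.inter h3)
    have hpre : simplexSet (n+1) t = e ⁻¹' T := by
      ext x
      have hsum : ∑ i, x i = x 0 + ∑ j : Fin n, x j.succ := Fin.sum_univ_succ x
      have hfa : (∀ i, 0 ≤ x i) ↔ (0 ≤ x 0 ∧ ∀ j : Fin n, 0 ≤ x j.succ) := by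
        constructor
        · intro h; exact ⟨h 0, fun j => h j.succ⟩
        · rintro ⟨h0, hs⟩ i
          rcases Fin.eq_zero_or_eq_succ i with rfl | ⟨j, rfl⟩
          · exact h0
          · exact hs j
      simp only [simplexSet, mem_setOf_eq, mem_preimage, hT, he,
        MeasurableEquiv.piFinSuccAbove_apply]
      rw [hsum, hfa]
      constructor
      · rintro ⟨⟨h0, hs⟩, hle⟩
        exact ⟨h0, fun i => by simpa [Fin.succAbove, Fin.tail] using hs i, by simpa [Fin.succAbove, Fin.tail] using hle⟩
      · rintro ⟨h0, hs, hle⟩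
        exact ⟨⟨h0, fun j => by simpa [Fin.succAbove, Fin.tail] using hs j⟩,
          by simpa [Fin.succAbove, Fin.tail] using hle⟩
    rw [hpre, hmp.measure_preimage hTmeas.nullMeasurableSet]
    rw [show (volume : Measure (ℝ × (Fin n → ℝ))) = (volume : Measure ℝ).prod volume from rfl]
    rw [Measure.prod_apply hTmeas]
    have hsec : ∀ a : ℝ, Prod.mk a ⁻¹' T =
        (if 0 ≤ a then simplexSet n (t - a) else ∅) := by
      intro a
      ext y
      by_cases ha : 0 ≤ a <;> simp [hT, simplexSet, ha, and_assoc] <;> intro _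
      constructor <;> intro h <;> linarith
    have hker : (fun a => volume (Prod.mk a ⁻¹' T)) =
        (Icc 0 t).indicator (fun a => ENNReal.ofReal ((t - a) ^ n / n.factorial)) := by
      funext a
      rw [hsec a]
      by_cases hmem : a ∈ Icc 0 t
      · rw [indicator_of_mem hmem, if_pos hmem.1, ih (t - a) (by linarith [hmem.2])]
      · rw [indicator_of_notMem hmem]
        by_cases ha : 0 ≤ a
        · have hta : t < a := by
            by_contra hta
            exact hmem ⟨ha, not_lt.mp hta⟩
          rw [if_pos ha, simplexSet_empty (by linarith), measure_empty]
        · rw [if_neg ha, measure_empty]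
    rw [hker,
      show lintegral volume ((Icc 0 t).indicator fun a =>
          ENNReal.ofReal ((t - a) ^ n / n.factorial))
        = ∫⁻ a in Icc 0 t, ENNReal.ofReal ((t - a) ^ n / n.factorial) from
        lintegral_indicator measurableSet_Icc _]
    have hint : IntegrableOn (fun a => (t - a) ^ n / n.factorial) (Icc 0 t) := by
      apply Continuous.integrableOn_Icc
      fun_prop
    have hnn : 0 ≤ᵐ[volume.restrict (Icc 0 t)]
        fun a => (t - a) ^ n / n.factorial :=
      (ae_restrict_iff' measurableSet_Icc).mpr (Filter.Eventually.of_forall fun a ha =>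
        div_nonneg (pow_nonneg (by linarith [ha.2]) n) (Nat.cast_nonneg _))
    rw [← ofReal_integral_eq_lintegral_ofReal hint hnn]
    congr 1
    rw [MeasureTheory.integral_Icc_eq_integral_Ioc, ← intervalIntegral.integral_of_le ht]
    have h1 : ∫ a in (0:ℝ)..t, (t - a) ^ n / n.factorial
        = (∫ a in (0:ℝ)..t, (t - a) ^ n) / n.factorial := by
      rw [intervalIntegral.integral_div]
    have h2 : ∫ a in (0:ℝ)..t, (t - a) ^ n = t ^ (n+1) / (n+1) := by
      rw [intervalIntegral.integral_comp_sub_left (fun x => x ^ n) t]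
      simp [integral_pow]
    rw [h1, h2, Nat.factorial_succ]
    push_cast
    field_simp


/-- Counting lemma for static designs: if the design certifies every monotone function
to within uncertain volume `v`, then the slab `{d - (p-1)!v < Σ x_k < d + (p-1)!v}`
contains at least `((d+(p-1)!v)^p - (d-(p-1)!v)^p - v p!)/((p-1)!v)^p` design points. -/
theorem design_slab_card_lower_bound (p : ℕ) (hp : 2 ≤ p) (D : Finset (Fin p → ℝ))
    (hD : ↑D ⊆ Icc (0 : Fin p → ℝ) 1) (v : ℝ) (hv : 0 < v)
    (hsup : ∀ f ∈ OmegaSet p, volume (uncertainRegion p ↑D f) ≤ ENNReal.ofReal v)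
    (d : ℝ) (hd1 : ((p - 1).factorial : ℝ) * v ≤ d)
    (hd2 : d + ((p - 1).factorial : ℝ) * v ≤ 1) :
    ((d + ((p - 1).factorial : ℝ) * v) ^ p - (d - ((p - 1).factorial : ℝ) * v) ^ p
        - v * (p.factorial : ℝ)) / (((p - 1).factorial : ℝ) * v) ^ p
      ≤ (({x ∈ (D : Set (Fin p → ℝ)) |
            d - ((p - 1).factorial : ℝ) * v < ∑ k, x k ∧
              ∑ k, x k < d + ((p - 1).factorial : ℝ) * v}).ncard : ℝ) := by
  classical
  set c : ℝ := ((p - 1).factorial : ℝ) * v with hc_def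
  have hc : 0 < c := mul_pos (by positivity) hv
  -- the monotone test function
  set f : (Fin p → ℝ) → ℝ := fun x => if d ≤ ∑ k, x k then 1 else -1 with hf_def
  have hfmem : f ∈ OmegaSet p := by
    constructor
    · intro x _ y _ hxy
      have hsum : ∑ k, x k ≤ ∑ k, y k := Finset.sum_le_sum fun i _ => hxy i
      by_cases hx : d ≤ ∑ k, x k
      · simp only [hf_def, if_pos hx, if_pos (le_trans hx hsum), le_refl]
      · simp only [hf_def, if_neg hx]
        by_cases hy : d ≤ ∑ k, y k <;> simp [hy] <;> norm_num
    · intro x _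
      by_cases hx : d ≤ ∑ k, x k <;> simp [hf_def, hx]
  have hU := hsup f hfmem
  -- the slab design points
  set T : Finset (Fin p → ℝ) :=
    D.filter (fun x => d - c < ∑ k, x k ∧ ∑ k, x k < d + c) with hT_def
  have hTset : {x ∈ (D : Set (Fin p → ℝ)) |
      d - c < ∑ k, x k ∧ ∑ k, x k < d + c} = (T : Set (Fin p → ℝ)) := by
    rw [hT_def, Finset.coe_filter]
    simp
  -- covering sets
  set B : (Fin p → ℝ) → Set (Fin p → ℝ) := fun x =>
    if d ≤ ∑ k, x k then (fun y => y - x) ⁻¹' simplexSet p c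
    else (fun y => x - y) ⁻¹' simplexSet p c with hB_def
  have hBvol : ∀ x, volume (B x) = ENNReal.ofReal (c ^ p / p.factorial) := by
    intro x
    simp only [hB_def]
    by_cases hx : d ≤ ∑ k, x k
    · rw [if_pos hx]
      have : (fun y : Fin p → ℝ => y - x) = (fun y => y + (-x)) := by
        funext y; rw [sub_eq_add_neg]
      rw [this, measure_preimage_add_right, volume_simplexSet p c hc.le]
    · rw [if_neg hx]
      have h1 : (fun y : Fin p → ℝ => x - y) ⁻¹' simplexSet p c
          = Neg.neg ⁻¹' ((fun y => x + y) ⁻¹' simplexSet p c) := by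
        ext y; simp [sub_eq_add_neg]
      rw [h1, Measure.measure_preimage_neg, measure_preimage_add, volume_simplexSet p c hc.le]
  -- the slab region
  set A : Set (Fin p → ℝ) :=
    Icc 0 1 ∩ {y | d - c < ∑ k, y k ∧ ∑ k, y k < d + c} with hA_def
  have hcover : A ⊆ uncertainRegion p ↑D f ∪ ⋃ x ∈ T, B x := by
    intro y hy
    obtain ⟨hycube, hy1, hy2⟩ : y ∈ Icc (0:Fin p → ℝ) 1 ∧ d - c < ∑ k, y k ∧ ∑ k, y k < d + c :=
      ⟨hy.1, hy.2.1, hy.2.2⟩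
    by_cases hyU : y ∈ uncertainRegion p ↑D f
    · exact Or.inl hyU
    · right
      have hcert : y ∈ (⋃ x ∈ {z ∈ (↑D : Set (Fin p → ℝ)) | f z = -1}, Icc (0 : Fin p → ℝ) x) ∪
          (⋃ x ∈ {z ∈ (↑D : Set (Fin p → ℝ)) | f z = 1}, Icc x (1 : Fin p → ℝ)) := by
        by_contra hnc
        exact hyU ⟨hycube, hnc⟩
      rcases hcert with h | h
      · rw [mem_iUnion₂] at h
        obtain ⟨x, ⟨hxD, hfx⟩, hyx⟩ := h
        have hsx : ¬ d ≤ ∑ k, x k := by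
          intro hcon
          rw [hf_def] at hfx
          simp only [if_pos hcon] at hfx
          norm_num at hfx
        push_neg at hsx
        have hyx2 : ∀ i, y i ≤ x i := fun i => hyx.2 i
        have hsum : ∑ k, y k ≤ ∑ k, x k := Finset.sum_le_sum fun i _ => hyx2 i
        have hxT : x ∈ T := by
          rw [hT_def, Finset.mem_filter]
          exact ⟨hxD, by linarith, by linarith⟩
        rw [mem_iUnion₂]
        refine ⟨x, hxT, ?_⟩
        simp only [hB_def, if_neg (not_le.mpr (by linarith : ∑ k, x k < d))]
        refine ⟨fun i => by simpa using sub_nonneg.mpr (hyx2 i), ?_⟩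
        have : ∑ i, (x i - y i) = ∑ k, x k - ∑ k, y k := Finset.sum_sub_distrib _ _
        simp only [Pi.sub_apply]
        rw [this]
        linarith
      · rw [mem_iUnion₂] at h
        obtain ⟨x, ⟨hxD, hfx⟩, hyx⟩ := h
        have hsx : d ≤ ∑ k, x k := by
          by_contra hcon
          rw [hf_def] at hfx
          simp only [if_neg hcon] at hfx
          norm_num at hfx
        have hyx2 : ∀ i, x i ≤ y i := fun i => hyx.1 i
        have hsum : ∑ k, x k ≤ ∑ k, y k := Finset.sum_le_sum fun i _ => hyx2 i
        have hxT : x ∈ T := by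
          rw [hT_def, Finset.mem_filter]
          exact ⟨hxD, by linarith, by linarith⟩
        rw [mem_iUnion₂]
        refine ⟨x, hxT, ?_⟩
        simp only [hB_def, if_pos hsx]
        refine ⟨fun i => by simpa using sub_nonneg.mpr (hyx2 i), ?_⟩
        have : ∑ i, (y i - x i) = ∑ k, y k - ∑ k, x k := Finset.sum_sub_distrib _ _
        simp only [Pi.sub_apply]
        rw [this]
        linarith
  have hAvol : volume A ≤ ENNReal.ofReal v + (T.card : ENNReal) * ENNReal.ofReal (c ^ p / p.factorial) := by
    calc volume A ≤ volume (uncertainRegion p ↑D f ∪ ⋃ x ∈ T, B x) := measure_mono hcover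
      _ ≤ volume (uncertainRegion p ↑D f) + volume (⋃ x ∈ T, B x) := measure_union_le _ _
      _ ≤ ENNReal.ofReal v + ∑ x ∈ T, volume (B x) :=
          add_le_add hU (measure_biUnion_finset_le _ _)
      _ = ENNReal.ofReal v + (T.card : ENNReal) * ENNReal.ofReal (c ^ p / p.factorial) := by
          rw [Finset.sum_congr rfl fun x _ => hBvol x, Finset.sum_const, nsmul_eq_mul]
  -- hyperplane has measure zero
  have hHvol : volume {y : Fin p → ℝ | ∑ k, y k = d + c} = 0 := by
    have hp0 : (p : ℝ) ≠ 0 := by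
      have : 0 < p := lt_of_lt_of_le (by norm_num) hp
      exact_mod_cast this.ne'
    set L : (Fin p → ℝ) →ₗ[ℝ] ℝ := ∑ i, LinearMap.proj i with hL_def
    have hLapp : ∀ z : Fin p → ℝ, L z = ∑ k, z k := by
      intro z
      rw [hL_def, LinearMap.sum_apply]
      rfl
    set y0 : Fin p → ℝ := fun _ => (d + c) / p with hy0_def
    have hy0 : ∑ k, y0 k = d + c := by
      rw [hy0_def]
      rw [Finset.sum_const, Finset.card_univ, Fintype.card_fin, nsmul_eq_mul]
      field_simp
    have hset : {y : Fin p → ℝ | ∑ k, y k = d + c}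
        = (fun y => y + (-y0)) ⁻¹' (LinearMap.ker L : Set (Fin p → ℝ)) := by
      ext y
      simp only [mem_setOf_eq, mem_preimage, SetLike.mem_coe, LinearMap.mem_ker, hLapp]
      have : ∑ k, (y + (-y0)) k = ∑ k, y k - ∑ k, y0 k := by
        simp [Finset.sum_sub_distrib, sub_eq_add_neg, Finset.sum_add_distrib]
      rw [this, hy0]
      constructor <;> intro <;> linarith
    rw [hset, measure_preimage_add_right]
    refine Measure.addHaar_submodule volume (LinearMap.ker L) ?_
    intro hker
    have h1 : (fun _ => (1:ℝ) : Fin p → ℝ) ∈ LinearMap.ker L := hker ▸ Submodule.mem_top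
    rw [LinearMap.mem_ker, hLapp] at h1
    simp only [Finset.sum_const, Finset.card_univ, Fintype.card_fin, nsmul_eq_mul,
      mul_one] at h1
    exact hp0 h1
  -- lower bound on slab volume
  have hlow : ENNReal.ofReal ((d + c) ^ p / p.factorial)
      ≤ volume A + ENNReal.ofReal ((d - c) ^ p / p.factorial) := by
    have hdc0' : (0:ℝ) ≤ d - c := by linarith
    have hsub : simplexSet p (d + c) ⊆
        A ∪ (simplexSet p (d - c) ∪ {y : Fin p → ℝ | ∑ k, y k = d + c}) := by
      rintro y ⟨hnn, hle⟩
      by_cases h1 : ∑ k, y k ≤ d - c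
      · exact Or.inr (Or.inl ⟨hnn, h1⟩)
      by_cases h2 : ∑ k, y k = d + c
      · exact Or.inr (Or.inr h2)
      left
      rw [hA_def]
      refine ⟨mem_Icc.mpr ⟨fun i => hnn i, fun i => ?_⟩, not_le.mp h1, lt_of_le_of_ne hle h2⟩
      have := Finset.single_le_sum (fun j _ => hnn j) (Finset.mem_univ i)
      calc y i ≤ ∑ k, y k := this
        _ ≤ d + c := hle
        _ ≤ 1 := hd2
    calc ENNReal.ofReal ((d + c) ^ p / p.factorial)
        = volume (simplexSet p (d + c)) := (volume_simplexSet p _ (by linarith)).symm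
      _ ≤ volume (A ∪ (simplexSet p (d - c) ∪ {y : Fin p → ℝ | ∑ k, y k = d + c})) :=
          measure_mono hsub
      _ ≤ volume A + volume (simplexSet p (d - c) ∪ {y : Fin p → ℝ | ∑ k, y k = d + c}) :=
          measure_union_le _ _
      _ ≤ volume A + (volume (simplexSet p (d - c))
            + volume {y : Fin p → ℝ | ∑ k, y k = d + c}) :=
          add_le_add_right (measure_union_le _ _) _
      _ = volume A + ENNReal.ofReal ((d - c) ^ p / p.factorial) := by
          rw [hHvol, volume_simplexSet p _ hdc0', add_zero]
  -- combine
  have hdc0 : 0 ≤ d - c := by linarith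
  have key : (d + c) ^ p / p.factorial
      ≤ v + (T.card : ℝ) * (c ^ p / p.factorial) + (d - c) ^ p / p.factorial := by
    have h1 : ENNReal.ofReal ((d + c) ^ p / p.factorial)
        ≤ ENNReal.ofReal (v + (T.card : ℝ) * (c ^ p / p.factorial) + (d - c) ^ p / p.factorial) := by
      refine le_trans hlow (le_trans (add_le_add_left hAvol _) ?_)
      rw [ENNReal.ofReal_add (by positivity) (by positivity),
        ENNReal.ofReal_add hv.le (by positivity), ENNReal.ofReal_mul (by positivity : (0:ℝ) ≤ (T.card : ℝ))]
      simp [ENNReal.ofReal_natCast]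
    rwa [ENNReal.ofReal_le_ofReal_iff (by positivity)] at h1
  rw [hTset, Set.ncard_coe_finset]
  have hfp : (0:ℝ) < p.factorial := by positivity
  rw [div_le_iff₀ (pow_pos hc p)]
  have e1 : (d+c)^p / (p.factorial:ℝ) * p.factorial = (d+c)^p :=
    div_mul_cancel₀ _ hfp.ne'
  have e2 : (d-c)^p / (p.factorial:ℝ) * p.factorial = (d-c)^p :=
    div_mul_cancel₀ _ hfp.ne'
  have e3 : (T.card:ℝ) * (c^p/(p.factorial:ℝ)) * p.factorial = (T.card:ℝ) * c^p := by
    field_simp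
  have h2 := mul_le_mul_of_nonneg_right key hfp.le
  rw [add_mul, add_mul, e1, e2, e3] at h2
  linarith [h2]
end

section
/- Let p ≥ 2 be an integer. Then lim_{n→∞} n^{1/p} · ∫_0^1 (1 − u^p/p!)^n du = (p!)^{1/p} · Γ(1/p) / p, where Γ is the Gamma function. -/
open MeasureTheory Set Filter

/-- Asymptotics of `∫_0^1 (1 - u^p/p!)^n du`:
`lim_{n→∞} n^(1/p) ∫_0^1 (1 - u^p/p!)^n du = (p!)^(1/p) Γ(1/p) / p` for `p ≥ 2`. -/
theorem integral_one_sub_pow_asymptotics (p : ℕ) (hp : 2 ≤ p) :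
    Tendsto (fun n : ℕ =>
        (n : ℝ) ^ (1 / (p : ℝ)) *
          ∫ u in Icc (0 : ℝ) 1, (1 - u ^ p / (p.factorial : ℝ)) ^ n)
      atTop
      (nhds ((p.factorial : ℝ) ^ (1 / (p : ℝ)) * Real.Gamma (1 / (p : ℝ)) / (p : ℝ))) := by
  have hp0 : (0 : ℝ) < p := by positivity
  set s : ℝ := 1 / (p : ℝ) with hs_def
  have hs0 : 0 < s := by positivity
  set c : ℝ := (p.factorial : ℝ) with hc_def
  have hc0 : (0 : ℝ) < c := by
    rw [hc_def]; exact Nat.cast_pos.mpr p.factorial_pos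
  have hc1 : (1 : ℝ) ≤ c := by
    rw [hc_def]; exact Nat.one_le_cast.mpr p.factorial_pos
  set a : ℕ → ℝ := fun n => ((n : ℝ) / c) ^ s with ha_def
  have ha_nonneg : ∀ n, 0 ≤ a n := fun n => Real.rpow_nonneg (by positivity) _
  have ha_pow : ∀ n : ℕ, a n ^ p = (n : ℝ) / c := by
    intro n
    rw [ha_def]
    rw [← Real.rpow_natCast (((n : ℝ) / c) ^ s) p, ← Real.rpow_mul (by positivity)]
    rw [hs_def, one_div_mul_cancel (ne_of_gt hp0), Real.rpow_one]
  set g : ℕ → ℝ → ℝ := fun n =>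
    (Ioc (0 : ℝ) (a n)).indicator (fun t => c ^ s * (1 - t ^ p / (n : ℝ)) ^ n) with hg_def
  -- The dominated convergence part
  have key : Tendsto (fun n => ∫ t in Ioi (0 : ℝ), g n t) atTop
      (nhds (∫ t in Ioi (0 : ℝ), c ^ s * Real.exp (-(t ^ p)))) := by
    apply tendsto_integral_of_dominated_convergence
      (fun t => c ^ s * Real.exp (-(t ^ (p : ℝ))))
    · intro n
      exact (Measurable.indicator (by fun_prop) measurableSet_Ioc).aestronglyMeasurable
    · have h1 : IntegrableOn (fun t : ℝ => Real.exp (-(t ^ (p : ℝ)))) (Ioi 0) := by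
        have := integrableOn_rpow_mul_exp_neg_rpow (p := (p : ℝ)) (s := 0)
          (by norm_num) (by exact_mod_cast Nat.one_le_of_lt hp)
        simpa using this
      exact h1.const_mul _
    · intro n
      filter_upwards [self_mem_ae_restrict (measurableSet_Ioi : MeasurableSet (Ioi (0:ℝ)))]
        with t ht
      have ht0 : 0 < t := ht
      rw [Real.rpow_natCast]
      by_cases hmem : t ∈ Ioc (0 : ℝ) (a n)
      · rw [hg_def]
        simp only [indicator_of_mem hmem]
        have htp : t ^ p ≤ (n : ℝ) / c := by
          calc t ^ p ≤ a n ^ p := pow_le_pow_left₀ ht0.le hmem.2 p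
            _ = (n : ℝ) / c := ha_pow n
        have hn0 : 0 < (n : ℝ) := by
          by_contra h
          push_neg at h
          have : (n : ℝ) / c ≤ 0 := div_nonpos_of_nonpos_of_nonneg h hc0.le
          nlinarith [pow_pos ht0 p]
        have htpn : t ^ p / (n : ℝ) ≤ 1 := by
          rw [div_le_one hn0]
          calc t ^ p ≤ (n : ℝ) / c := htp
            _ ≤ (n : ℝ) := by
              rw [div_le_iff₀ hc0]; nlinarith
        have h01 : 0 ≤ 1 - t ^ p / (n : ℝ) := by linarith
        have hle : 1 - t ^ p / (n : ℝ) ≤ Real.exp (-(t ^ p / (n : ℝ))) := by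
          have := Real.add_one_le_exp (-(t ^ p / (n : ℝ)))
          linarith
        have hpow : (1 - t ^ p / (n : ℝ)) ^ n ≤ Real.exp (-(t ^ p)) := by
          calc (1 - t ^ p / (n : ℝ)) ^ n ≤ (Real.exp (-(t ^ p / (n : ℝ)))) ^ n :=
                pow_le_pow_left₀ h01 hle n
            _ = Real.exp (-(t ^ p / (n : ℝ)) * n) := by
                rw [← Real.exp_nat_mul]; ring_nf
            _ = Real.exp (-(t ^ p)) := by
                congr 1
                field_simp
        rw [Real.norm_eq_abs, abs_of_nonneg (by positivity)]
        exact mul_le_mul_of_nonneg_left hpow (by positivity)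
      · rw [hg_def]
        simp only [indicator_of_notMem hmem]
        simp only [norm_zero]
        positivity
    · filter_upwards [self_mem_ae_restrict (measurableSet_Ioi : MeasurableSet (Ioi (0:ℝ)))]
        with t ht
      have ht0 : 0 < t := ht
      have ha_tendsto : Tendsto a atTop atTop :=
        (tendsto_rpow_atTop hs0).comp
          ((tendsto_natCast_atTop_atTop (R := ℝ)).atTop_div_const hc0)
      have hev : ∀ᶠ n : ℕ in atTop, c ^ s * (1 - t ^ p / (n : ℝ)) ^ n = g n t := by
        filter_upwards [ha_tendsto.eventually_ge_atTop t] with n hn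
        rw [hg_def]
        exact (indicator_of_mem (show t ∈ Ioc 0 (a n) from ⟨ht0, hn⟩)
          (fun t => c ^ s * (1 - t ^ p / (n : ℝ)) ^ n)).symm
      apply Tendsto.congr' hev
      have h2 := (Real.tendsto_one_add_div_pow_exp (-(t ^ p))).const_mul (c ^ s)
      apply h2.congr
      intro n
      ring_nf
  -- Identify the limit value
  have hval : (∫ t in Ioi (0 : ℝ), c ^ s * Real.exp (-(t ^ p))) =
      c ^ s * Real.Gamma s / p := by
    have heq : (fun t : ℝ => c ^ s * Real.exp (-(t ^ p))) =
        fun t : ℝ => c ^ s * Real.exp (-(t ^ (p : ℝ))) := by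
      funext t; rw [Real.rpow_natCast]
    rw [heq, integral_const_mul, integral_exp_neg_rpow hp0,
      ← hs_def, Real.Gamma_add_one (ne_of_gt hs0)]
    rw [hs_def]
    field_simp
  rw [← hval]
  -- Substitution: the original expression equals ∫ g n for n ≥ 1
  apply key.congr'
  filter_upwards [eventually_ge_atTop 1] with n hn
  have hn0 : 0 < (n : ℝ) := by exact_mod_cast hn
  set d : ℝ := (c / (n : ℝ)) ^ s with hd_def
  have hd0 : 0 < d := Real.rpow_pos_of_pos (by positivity) _
  have hd_pow : d ^ p = c / (n : ℝ) := by
    rw [hd_def, ← Real.rpow_natCast ((c / (n : ℝ)) ^ s) p, ← Real.rpow_mul (by positivity),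
      hs_def, one_div_mul_cancel (ne_of_gt hp0), Real.rpow_one]
  have hinv : 1 / d = a n := by
    have han : a n = ((n : ℝ) / c) ^ s := rfl
    rw [han, one_div, hd_def, ← Real.inv_rpow (by positivity), inv_div]
  have hnd : (n : ℝ) ^ s * d = c ^ s := by
    rw [hd_def, ← Real.mul_rpow hn0.le (by positivity)]
    congr 1
    field_simp
  -- rewrite RHS
  have hrhs : (∫ t in Ioi (0 : ℝ), g n t) =
      c ^ s * ∫ t in (0 : ℝ)..(a n), (1 - t ^ p / (n : ℝ)) ^ n := by
    rw [hg_def]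
    rw [integral_indicator measurableSet_Ioc]
    rw [Measure.restrict_restrict measurableSet_Ioc]
    have : Ioc (0 : ℝ) (a n) ∩ Ioi 0 = Ioc 0 (a n) := by
      rw [inter_eq_left]
      exact Ioc_subset_Ioi_self
    rw [this, intervalIntegral.integral_of_le (ha_nonneg n), ← integral_const_mul]
  rw [hrhs]
  -- rewrite LHS
  have hlhs : (∫ u in Icc (0 : ℝ) 1, (1 - u ^ p / c) ^ n) =
      d * ∫ t in (0 : ℝ)..(a n), (1 - t ^ p / (n : ℝ)) ^ n := by
    rw [integral_Icc_eq_integral_Ioc, ← intervalIntegral.integral_of_le zero_le_one]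
    have hfun : ∀ u : ℝ, (1 - u ^ p / c) ^ n =
        (fun t => (1 - t ^ p / (n : ℝ)) ^ n) (u / d) := by
      intro u
      simp only
      congr 2
      rw [div_pow, hd_pow]
      field_simp
    simp_rw [hfun]
    rw [intervalIntegral.integral_comp_div (f := fun t => (1 - t ^ p / (n : ℝ)) ^ n) (ne_of_gt hd0)]
    rw [zero_div, smul_eq_mul, ← hinv, one_div]
  rw [hlhs, ← mul_assoc, hnd]
end

section
/- Define g_1(t) = 2^t − 2^t/t + 1/t for t > 0. Then g_1 is strictly increasing on the interval (0,1], and g_1(t) > 1 − ln 2 for every t ∈ (0,1]. -/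
open Set Real

noncomputable abbrev Lc : ℝ := Real.log 2

lemma hL0 : (0:ℝ) < Lc := Real.log_pos (by norm_num)
lemma hL1 : Lc < 1 := lt_of_le_of_lt Real.log_two_lt_d9.le (by norm_num)

lemma hasDerivAt_two_rpow (x : ℝ) :
    HasDerivAt (fun t : ℝ => (2:ℝ) ^ t) ((2:ℝ) ^ x * Lc) x :=
  (Real.hasStrictDerivAt_const_rpow (by norm_num) x).hasDerivAt

lemma two_rpow_pos (x : ℝ) : (0:ℝ) < (2:ℝ) ^ x := Real.rpow_pos_of_pos (by norm_num) x

lemma two_rpow_eq (t : ℝ) : (2:ℝ) ^ t = Real.exp (Lc * t) := by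
  rw [Real.rpow_def_of_pos (by norm_num)]

lemma cont_two_rpow : Continuous (fun t : ℝ => (2:ℝ) ^ t) := by
  have : (fun t : ℝ => (2:ℝ) ^ t) = fun t => Real.exp (Lc * t) := funext two_rpow_eq
  rw [this]; continuity

/-- strict convexity: `t * log 2 < 2^t - 1` for `t ≠ 0` -/
lemma key1 {t : ℝ} (ht : t ≠ 0) : t * Lc < (2:ℝ) ^ t - 1 := by
  have h := Real.add_one_lt_exp (x := Lc * t) (mul_ne_zero hL0.ne' ht)
  rw [two_rpow_eq]; linarith

/-- `2^t * (1-t) ≤ 1` for `0 ≤ t < 1` -/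
lemma key2 {t : ℝ} (ht0 : 0 ≤ t) (ht1 : t < 1) : (2:ℝ) ^ t * (1 - t) ≤ 1 := by
  have h1 : (0:ℝ) < 1 - t := by linarith
  have hlog : Real.log (1 - t) ≤ (1 - t) - 1 := Real.log_le_sub_one_of_pos h1
  have : Lc * t + Real.log (1 - t) ≤ 0 := by nlinarith [hL1, hL0]
  calc (2:ℝ) ^ t * (1 - t) = Real.exp (Lc * t + Real.log (1 - t)) := by
        rw [Real.exp_add, two_rpow_eq, Real.exp_log h1]
    _ ≤ Real.exp 0 := Real.exp_le_exp.mpr this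
    _ = 1 := Real.exp_zero

/-- auxiliary function for the lower bound -/
lemma H_pos {t : ℝ} (ht : t ∈ Ioc (0:ℝ) 1) :
    0 < t * (2:ℝ) ^ t - (2:ℝ) ^ t + 1 - (1 - Lc) * t := by
  set G : ℝ → ℝ := fun t => (2:ℝ) ^ t * (1 + (t - 1) * Lc) - (1 - Lc) with hG
  have hGderiv : ∀ x : ℝ, HasDerivAt G ((2:ℝ)^x * Lc * (1 + (x-1)*Lc) + (2:ℝ)^x * (1 * Lc)) x := by
    intro x
    exact ((hasDerivAt_two_rpow x).mul
      (((hasDerivAt_id x).sub_const 1).mul_const Lc |>.const_add 1)).sub_const _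
  have hGmono : StrictMonoOn G (Icc (0:ℝ) 1) := by
    apply strictMonoOn_of_deriv_pos (convex_Icc 0 1)
    · exact ((cont_two_rpow.mul (by continuity)).sub continuous_const).continuousOn
    · intro x hx
      rw [interior_Icc] at hx
      rw [(hGderiv x).deriv]
      have hp := two_rpow_pos x
      have h3 : 0 < 2 + (x - 1) * Lc := by nlinarith [hL0, hL1, hx.1, mul_pos hx.1 hL0]
      have heq : (2:ℝ)^x * Lc * (1 + (x-1)*Lc) + (2:ℝ)^x * (1 * Lc)
          = (2:ℝ)^x * Lc * (2 + (x-1)*Lc) := by ring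
      rw [heq]
      exact mul_pos (mul_pos hp hL0) h3
  have hG0 : G 0 = 0 := by norm_num [hG]
  have hGpos : ∀ x ∈ Ioc (0:ℝ) 1, 0 < G x := by
    intro x hx
    have := hGmono (by constructor <;> norm_num) ⟨hx.1.le, hx.2⟩ hx.1
    rwa [hG0] at this
  set H : ℝ → ℝ := fun t => t * (2:ℝ) ^ t - (2:ℝ) ^ t + 1 - (1 - Lc) * t with hH
  have hHmono : StrictMonoOn H (Icc (0:ℝ) 1) := by
    apply strictMonoOn_of_deriv_pos (convex_Icc 0 1)
    · exact (((continuous_id.mul cont_two_rpow).sub cont_two_rpow).add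
        continuous_const).sub (continuous_const.mul continuous_id) |>.continuousOn
    · intro x hx
      rw [interior_Icc] at hx
      have hd : HasDerivAt H (1 * (2:ℝ)^x + id x * ((2:ℝ)^x * Lc) - (2:ℝ)^x * Lc - (1 - Lc) * 1) x :=
        ((((hasDerivAt_id x).mul (hasDerivAt_two_rpow x)).sub
          (hasDerivAt_two_rpow x)).add_const 1).sub ((hasDerivAt_id x).const_mul (1 - Lc))
      rw [hd.deriv]
      have hpos := hGpos x ⟨hx.1, hx.2.le⟩
      simp only [hG] at hpos
      simp only [id_eq]
      nlinarith [hpos]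
  have hH0 : H 0 = 0 := by simp [hH, Real.rpow_zero]
  have := hHmono (by constructor <;> norm_num) ⟨ht.1.le, ht.2⟩ ht.1
  rwa [hH0] at this

/-- The function `g₁(t) = 2^t - 2^t/t + 1/t` is strictly increasing on `(0,1]`, and
`g₁(t) > 1 - ln 2` for every `t ∈ (0,1]`. -/
theorem g_one_strictMono_and_lower_bound :
    StrictMonoOn (fun t : ℝ => (2 : ℝ) ^ t - (2 : ℝ) ^ t / t + 1 / t) (Ioc (0 : ℝ) 1) ∧
    ∀ t ∈ Ioc (0 : ℝ) 1,
      1 - Real.log 2 < (2 : ℝ) ^ t - (2 : ℝ) ^ t / t + 1 / t := by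
  constructor
  · apply strictMonoOn_of_deriv_pos (convex_Ioc 0 1)
    · apply ContinuousOn.add
      · exact cont_two_rpow.continuousOn.sub
          (cont_two_rpow.continuousOn.div continuousOn_id (fun x hx => ne_of_gt hx.1))
      · exact continuousOn_const.div continuousOn_id (fun x hx => ne_of_gt hx.1)
    · intro x hx
      rw [interior_Ioc] at hx
      obtain ⟨hx0, hx1⟩ := hx
      have hxne : x ≠ 0 := ne_of_gt hx0
      have hd : HasDerivAt (fun t : ℝ => (2 : ℝ) ^ t - (2 : ℝ) ^ t / t + 1 / t)
          ((2:ℝ)^x * Lc - ((2:ℝ)^x * Lc * x - (2:ℝ)^x * 1) / x ^ 2 + (0 * x - 1 * 1) / x ^ 2) x :=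
        ((hasDerivAt_two_rpow x).sub
          ((hasDerivAt_two_rpow x).div (hasDerivAt_id x) hxne)).add
          ((hasDerivAt_const x 1).div (hasDerivAt_id x) hxne)
      rw [hd.deriv]
      have h1 := key1 hxne
      have h2 := key2 hx0.le hx1
      have hp := two_rpow_pos x
      have hx2 : (0:ℝ) < x ^ 2 := by positivity
      have heq : (2:ℝ)^x * Lc - ((2:ℝ)^x * Lc * x - (2:ℝ)^x * 1) / x ^ 2 + (0 * x - 1 * 1) / x ^ 2
          = ((2:ℝ)^x * Lc * x * (x - 1) + ((2:ℝ)^x - 1)) / x ^ 2 := by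
        field_simp; ring
      rw [heq]
      apply div_pos _ hx2
      nlinarith [mul_le_mul_of_nonneg_left h2 (mul_pos hx0 hL0).le]
  · intro t ht
    obtain ⟨ht0, ht1⟩ := ht
    have h := H_pos ⟨ht0, ht1⟩
    have heq : (2:ℝ)^t - (2:ℝ)^t/t + 1/t = (t * (2:ℝ)^t - (2:ℝ)^t + 1) / t := by
      field_simp
    rw [heq, lt_div_iff₀ ht0]
    nlinarith [h]
end
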